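/- Let X → Y → Z → X⟦1⟧ be a distinguished triangle in 𝒞 that is thin, i.e. m(Y) = m(X) + m(Z), with connecting morphism w : Z → X⟦1⟧. Let g : Z' → Z be any morphism, and let X → W → Z' → X⟦1⟧ be any distinguished triangle whose connecting morphism Z' → X⟦1⟧ is the composite g ≫ w. Then this second triangle is also thin: m(W) = m(X) + m(Z'). -/

import Mathlib

open CategoryTheory Category Limits Pretriangulated

/-- If `X → Y → Z → X⟦1⟧` is a thin distinguished triangle (i.e. `m Y = m X + m Z`)
with connecting morphism `w : Z ⟶ X⟦1⟧`, `g : Z' ⟶ Z` is any morphism, and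
`X → W → Z' → X⟦1⟧` is any distinguished triangle with connecting morphism
`g ≫ w`, then the second triangle is also thin: `m W = m X + m Z'`. -/
theorem thin_ET1op {C : Type*} [Category C] [Preadditive C] [HasZeroObject C]
    [HasShift C ℤ] [∀ n : ℤ, (CategoryTheory.shiftFunctor C n).Additive]
    [Pretriangulated C] [IsTriangulated C] [HasBinaryBiproducts C]
    (m : C → ℝ)
    (hiso : ∀ {X Y : C}, (X ≅ Y) → m X = m Y)
    (hadd : ∀ X Y : C, m (X ⊞ Y) = m X + m Y)
    (hshift : ∀ X : C, m (X⟦(1 : ℤ)⟧) = m X)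
    (htri : ∀ T : Triangle C, T ∈ (distTriang C) → m T.obj₂ ≤ m T.obj₁ + m T.obj₃)
    {X Y Z Z' W : C} (u : X ⟶ Y) (v : Y ⟶ Z) (w : Z ⟶ X⟦(1 : ℤ)⟧)
    (hT : Triangle.mk u v w ∈ distTriang C)
    (hthin : m Y = m X + m Z)
    (g : Z' ⟶ Z) (a : X ⟶ W) (b : W ⟶ Z')
    (hT' : Triangle.mk a b (g ≫ w) ∈ distTriang C) :
    m W = m X + m Z' := by
  -- upper bound
  have hupper : m W ≤ m X + m Z' := htri _ hT'
  -- the biproduct triangle `Y ⟶ Y ⊞ Z' ⟶ Z' ⟶ Y⟦1⟧`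
  have h₁₂ : Triangle.mk (biprod.inl : Y ⟶ Y ⊞ Z') biprod.snd 0 ∈ distTriang C :=
    binaryBiproductTriangle_distinguished Y Z'
  -- a cone for `(v, g) : Y ⊞ Z' ⟶ Z`
  obtain ⟨V', p, q, hV⟩ := distinguished_cocone_triangle (biprod.desc v g : Y ⊞ Z' ⟶ Z)
  -- rotation of `hT` : cone of `v` is `X⟦1⟧`
  have h₁₃ : Triangle.mk v w (-u⟦(1 : ℤ)⟧') ∈ distTriang C := by
    exact rot_of_distTriang _ hT
  have comm : (biprod.inl : Y ⟶ Y ⊞ Z') ≫ biprod.desc v g = v := by simp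
  -- octahedron
  let O := Triangulated.someOctahedron comm h₁₂ hV h₁₃
  have hm₁ : O.m₁ = g ≫ w := by
    have h1 := O.comm₁
    try dsimp at h1
    calc O.m₁ = biprod.inr ≫ (biprod.snd : Y ⊞ Z' ⟶ Z') ≫ O.m₁ := by simp
    _ = biprod.inr ≫ biprod.desc v g ≫ w := by rw [h1]
    _ = g ≫ w := by simp
  -- `V' ≅ W⟦1⟧` : compare the octahedron triangle with the double rotation of `hT'`
  have hrot : (Triangle.mk a b (g ≫ w)).rotate.rotate ∈ distTriang C :=
    rot_of_distTriang _ (rot_of_distTriang _ hT')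
  have e : Triangle.mk O.m₁ O.m₃ (q ≫ (biprod.snd : Y ⊞ Z' ⟶ Z')⟦(1 : ℤ)⟧')
      ≅ (Triangle.mk a b (g ≫ w)).rotate.rotate :=
    isoTriangleOfIso₁₂ _ _ O.mem hrot (Iso.refl _) (Iso.refl _) (by
      dsimp
      exact (comp_id _).trans (hm₁.trans (id_comp _).symm))
  have eV : V' ≅ W⟦(1 : ℤ)⟧ := Triangle.π₃.mapIso e
  have hV'W : m V' = m W := by rw [hiso eV, hshift]
  -- lower bound from the triangle `Y ⊞ Z' ⟶ Z ⟶ V' ⟶ (Y ⊞ Z')⟦1⟧` rotated twice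
  have hlow := htri _ (rot_of_distTriang _ (rot_of_distTriang _ hV))
  change m ((Y ⊞ Z')⟦(1 : ℤ)⟧) ≤ m V' + m (Z⟦(1 : ℤ)⟧) at hlow
  rw [hshift, hshift, hadd, hV'W] at hlow
  linarith
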